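/- Let f : ℝ → ℝ be 2π-periodic, Lipschitz continuous, and satisfy 0 < f(α) for all α; set λ* := max_{α∈[0,2π]} f(α) and ω* := √λ*, and for ω > ω* define T⁰(ω) := (1/2π)∫₀^{2π} f(α)/(ω² − f(α)) dα. For x > 0 let ω₀(x) denote the unique solution in (ω*, ∞) of x·T⁰(ω) = 1. Then x ↦ ω₀(x) is strictly increasing on (0, ∞), ω₀(x) → ω* as x → 0⁺, and ω₀(x) → ∞ as x → ∞. -/

import Mathlib

open scoped Real
open Filter

/-- the localized frequency x ↦ ω₀(x), defined as the unique
solution in (ω*, ∞) of x·T⁰(ω) = 1, is strictly increasing, tends to the band edge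
ω* as x → 0⁺, and tends to ∞ as x → ∞. -/
theorem stmt_11
    (f : ℝ → ℝ)
    (hf_per : Function.Periodic f (2 * π))
    (L : NNReal) (hf_lip : LipschitzWith L f)
    (hf_pos : ∀ α : ℝ, 0 < f α)
    (lamStar : ℝ) (hlam : IsGreatest (f '' Set.Icc 0 (2 * π)) lamStar)
    (ωStar : ℝ) (hωStar : ωStar = Real.sqrt lamStar)
    (T0 : ℝ → ℝ)
    (hT0 : ∀ ω : ℝ, ωStar < ω →
      T0 ω = (1 / (2 * π)) * ∫ α in (0:ℝ)..(2 * π), f α / (ω ^ 2 - f α))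
    (ω₀ : ℝ → ℝ)
    (hω₀_sol : ∀ x : ℝ, 0 < x → ω₀ x ∈ Set.Ioi ωStar ∧ x * T0 (ω₀ x) = 1)
    (hω₀_uniq : ∀ x : ℝ, 0 < x → ∀ ω ∈ Set.Ioi ωStar, x * T0 ω = 1 → ω = ω₀ x) :
    StrictMonoOn ω₀ (Set.Ioi 0) ∧
    Tendsto ω₀ (nhdsWithin 0 (Set.Ioi 0)) (nhds ωStar) ∧
    Tendsto ω₀ atTop atTop := by
  have hπ : (0:ℝ) < π := Real.pi_pos
  have h2π : (0:ℝ) < 2 * π := by positivity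
  have hcont : Continuous f := hf_lip.continuous
  -- f α ≤ lamStar for all α
  have hfle : ∀ α, f α ≤ lamStar := by
    intro α
    obtain ⟨y, hy, hfy⟩ := hf_per.exists_mem_Ico₀ h2π α
    rw [hfy]
    exact hlam.2 ⟨y, ⟨hy.1, hy.2.le⟩, rfl⟩
  have hlam_pos : 0 < lamStar := lt_of_lt_of_le (hf_pos 0) (hfle 0)
  have hωStar_nonneg : 0 ≤ ωStar := hωStar ▸ Real.sqrt_nonneg _
  -- for ω > ωStar, f α < ω^2
  have hsq : ∀ ω : ℝ, ωStar < ω → ∀ α, f α < ω ^ 2 := by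
    intro ω hω α
    have h1 : ωStar ^ 2 = lamStar := by
      rw [hωStar, sq, Real.mul_self_sqrt hlam_pos.le]
    have h2 : ωStar ^ 2 < ω ^ 2 := by nlinarith
    calc f α ≤ lamStar := hfle α
      _ = ωStar ^ 2 := h1.symm
      _ < ω ^ 2 := h2
  have hgcont : ∀ ω : ℝ, ωStar < ω → Continuous (fun α => f α / (ω ^ 2 - f α)) := by
    intro ω hω
    exact hcont.div (continuous_const.sub hcont)
      (fun α => ne_of_gt (sub_pos.mpr (hsq ω hω α)))
  have hgint : ∀ ω : ℝ, ωStar < ω →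
      IntervalIntegrable (fun α => f α / (ω ^ 2 - f α)) MeasureTheory.volume 0 (2 * π) :=
    fun ω hω => (hgcont ω hω).intervalIntegrable _ _
  -- positivity of T0
  have hT0pos : ∀ ω : ℝ, ωStar < ω → 0 < T0 ω := by
    intro ω hω
    rw [hT0 ω hω]
    have hI : 0 < ∫ α in (0:ℝ)..(2 * π), f α / (ω ^ 2 - f α) :=
      intervalIntegral.intervalIntegral_pos_of_pos_on (hgint ω hω)
        (fun α _ => div_pos (hf_pos α) (sub_pos.mpr (hsq ω hω α))) h2π
    positivity
  -- strict antitonicity of T0 on (ωStar, ∞)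
  have hanti : StrictAntiOn T0 (Set.Ioi ωStar) := by
    intro a ha b hb hab
    rw [Set.mem_Ioi] at ha hb
    rw [hT0 a ha, hT0 b hb]
    have hint : 0 < ∫ α in (0:ℝ)..(2 * π),
        (f α / (a ^ 2 - f α) - f α / (b ^ 2 - f α)) := by
      apply intervalIntegral.intervalIntegral_pos_of_pos_on
        (((hgcont a ha).sub (hgcont b hb)).intervalIntegrable _ _) _ h2π
      intro α _
      have h1 : 0 < a ^ 2 - f α := sub_pos.mpr (hsq a ha α)
      have h2 : a ^ 2 - f α < b ^ 2 - f α := by nlinarith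
      exact sub_pos.mpr (div_lt_div_of_pos_left (hf_pos α) h1 h2)
    rw [intervalIntegral.integral_sub (hgint a ha) (hgint b hb)] at hint
    have := sub_pos.mp hint
    have h2πinv : (0:ℝ) < 1 / (2 * π) := by positivity
    exact mul_lt_mul_of_pos_left this h2πinv
  refine ⟨?_, ?_, ?_⟩
  · -- strict monotonicity
    intro x hx y hy hxy
    rw [Set.mem_Ioi] at hx hy
    obtain ⟨hmx, hex⟩ := hω₀_sol x hx
    obtain ⟨hmy, hey⟩ := hω₀_sol y hy
    have hTx : T0 (ω₀ x) = 1 / x := eq_one_div_of_mul_eq_one_left (by rw [mul_comm]; exact hex)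
    have hTy : T0 (ω₀ y) = 1 / y := eq_one_div_of_mul_eq_one_left (by rw [mul_comm]; exact hey)
    have hlt : T0 (ω₀ y) < T0 (ω₀ x) := by
      rw [hTx, hTy]; exact one_div_lt_one_div_of_lt hx hxy
    exact (hanti.lt_iff_gt hmy hmx).mp hlt
  · -- tendsto ωStar as x → 0+
    rw [tendsto_order]
    constructor
    · intro a ha
      filter_upwards [self_mem_nhdsWithin] with x hx
      exact lt_trans ha (hω₀_sol x hx).1
    · intro b hb
      have hbm : b ∈ Set.Ioi ωStar := hb
      have hTb : 0 < T0 b := hT0pos b hb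
      have hmem : Set.Ioo (0:ℝ) (1 / T0 b) ∈ nhdsWithin 0 (Set.Ioi 0) :=
        Ioo_mem_nhdsGT_of_mem ⟨le_refl 0, by positivity⟩
      filter_upwards [hmem] with x hx
      have hx0 : 0 < x := hx.1
      obtain ⟨hmx, hex⟩ := hω₀_sol x hx0
      have h1 : x * T0 b < 1 := (lt_div_iff₀ hTb).mp hx.2
      have h2 : x * T0 b < x * T0 (ω₀ x) := by rw [hex]; exact h1
      have h3 : T0 b < T0 (ω₀ x) := (mul_lt_mul_iff_right₀ hx0).mp h2
      exact (hanti.lt_iff_gt hbm hmx).mp h3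
  · -- tendsto atTop
    rw [tendsto_atTop]
    intro b
    set M := max b (ωStar + 1) with hM
    have hMgt : ωStar < M := lt_of_lt_of_le (by linarith) (le_max_right _ _)
    have hMm : M ∈ Set.Ioi ωStar := hMgt
    have hTM : 0 < T0 M := hT0pos M hMgt
    filter_upwards [eventually_gt_atTop (1 / T0 M), eventually_gt_atTop (0:ℝ)]
      with x h1 h2
    obtain ⟨hmx, hex⟩ := hω₀_sol x h2
    have h3 : 1 < x * T0 M := (div_lt_iff₀ hTM).mp h1
    have h4 : x * T0 (ω₀ x) < x * T0 M := by rw [hex]; exact h3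
    have h5 : T0 (ω₀ x) < T0 M := (mul_lt_mul_iff_right₀ h2).mp h4
    have h6 : M < ω₀ x := (hanti.lt_iff_gt hmx hMm).mp h5
    exact le_of_lt (lt_of_le_of_lt (le_max_left _ _) h6)
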